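/- arXiv:2309.16512 — 3 statements merged into one kernel-verified Lean document; each statement's English description precedes it below -/
import Mathlib

section
/- (Extreme points of the ℓ1-sphere section of an arrangement cone, Lemma 2.) Let X ∈ ℝ^{n×d}, let D ∈ ℝ^{n×n} be a diagonal matrix with diagonal entries in {0, 1}, and let C := {w ∈ ℝ^d : (2D − I)Xw ≥ 0 entrywise, ‖w‖₁ = 1}. Then w is an extreme point of C (that is, w ∈ C and w does not lie strictly between two distinct points of C) if and only if w ∈ C and there exists a subset S of d−1 linearly independent rows of the stacked matrix [X; I_d] ∈ ℝ^{(n+d)×d} such that every row indexed by S is orthogonal to w; equivalently, w spans the one-dimensional null space of those d−1 rows and satisfies ‖w‖₁ = 1. -/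
open Matrix Submodule Module

private lemma stmt12_amul {n d : ℕ} (X : Matrix (Fin n) (Fin d) ℝ) (D : Matrix (Fin n) (Fin n) ℝ)
    (hdiag : ∀ i j, i ≠ j → D i j = 0) (u : Fin d → ℝ) (i : Fin n) :
    (((2 : ℝ) • D - 1) * X).mulVec u i = (2 * D i i - 1) * (X i ⬝ᵥ u) := by
  have hM : ∀ j, ((((2 : ℝ) • D - 1) * X : Matrix (Fin n) (Fin d) ℝ)) i j
      = (2 * D i i - 1) * X i j := by
    intro j
    rw [Matrix.mul_apply, Finset.sum_eq_single i]
    · simp [Matrix.sub_apply, Matrix.smul_apply, Matrix.one_apply]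
    · intro l _ hl
      simp [Matrix.sub_apply, Matrix.smul_apply, Matrix.one_apply, hdiag i l (Ne.symm hl),
        (Ne.symm hl : i ≠ l)]
    · simp
  simp only [Matrix.mulVec, dotProduct, hM, mul_assoc]
  rw [← Finset.mul_sum]

private lemma stmt12_single_dot {d : ℕ} (u : Fin d → ℝ) (k : Fin d) :
    (∑ j, (Pi.single k (1:ℝ) : Fin d → ℝ) j * u j) = u k := by
  rw [Finset.sum_eq_single k]
  · simp
  · intro l _ hl
    simp [Pi.single_apply, hl]
  · simp

private lemma stmt12_ker_dim {d : ℕ} {m : Type*} [Fintype m] (M : Matrix m (Fin d) ℝ)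
    (hli : LinearIndependent ℝ M) :
    finrank ℝ (LinearMap.ker M.mulVecLin) + Fintype.card m = d := by
  have h1 := LinearMap.finrank_range_add_finrank_ker M.mulVecLin
  rw [Module.finrank_fin_fun] at h1
  have h2 : M.rank = Fintype.card m := hli.rank_matrix
  rw [Matrix.rank] at h2
  omega

private lemma stmt12_mem_ker {d : ℕ} {m : Type*} [Fintype m] (M : Matrix m (Fin d) ℝ)
    (u : Fin d → ℝ) :
    u ∈ LinearMap.ker M.mulVecLin ↔ ∀ s, (∑ j, M s j * u j) = 0 := by
  simp [LinearMap.mem_ker, funext_iff, Matrix.mulVec, dotProduct]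

set_option maxHeartbeats 1000000 in
/-- Extreme points of the ℓ1-sphere section of an arrangement cone,
Lemma 2. -/
theorem stmt12 {n d : ℕ} (X : Matrix (Fin n) (Fin d) ℝ) (D : Matrix (Fin n) (Fin n) ℝ)
    (hdiag : ∀ i j, i ≠ j → D i j = 0) (h01 : ∀ i, D i i = 0 ∨ D i i = 1)
    (C : Set (Fin d → ℝ))
    (hC : C = {w : Fin d → ℝ |
      (∀ i, 0 ≤ (((2 : ℝ) • D - 1) * X).mulVec w i) ∧ (∑ k, |w k|) = 1})
    (row : Fin n ⊕ Fin d → (Fin d → ℝ))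
    (hrow1 : ∀ i, row (Sum.inl i) = X i)
    (hrow2 : ∀ k, row (Sum.inr k) = Pi.single k 1)
    (w : Fin d → ℝ) :
    (w ∈ C ∧ ∀ w₁ ∈ C, ∀ w₂ ∈ C, ∀ θ : ℝ, 0 < θ → θ < 1 →
        w = θ • w₁ + (1 - θ) • w₂ → w₁ = w ∧ w₂ = w) ↔
    (w ∈ C ∧ ∃ S : Finset (Fin n ⊕ Fin d), S.card = d - 1 ∧
        LinearIndependent ℝ (fun s : {a // a ∈ S} => row s.1) ∧
        ∀ s ∈ S, (∑ k, row s k * w k) = 0) := by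
  classical
  subst hC
  set A : Matrix (Fin n) (Fin d) ℝ := ((2 : ℝ) • D - 1) * X with hA
  have hAw : ∀ (u : Fin d → ℝ) i, A.mulVec u i = (2 * D i i - 1) * (X i ⬝ᵥ u) :=
    fun u i => stmt12_amul X D hdiag u i
  have hsig : ∀ i : Fin n, (2 * D i i - 1) = 1 ∨ (2 * D i i - 1) = -1 := by
    intro i; rcases h01 i with h | h <;> rw [h] <;> norm_num
  have hsig0 : ∀ i : Fin n, (2 * D i i - 1) ≠ 0 := by
    intro i; rcases hsig i with h | h <;> rw [h] <;> norm_num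
  have hrowdot : ∀ s (u : Fin d → ℝ), (∑ k, row s k * u k) = row s ⬝ᵥ u := fun s u => rfl
  constructor
  · ------------------------------------------------------------------
    -- forward direction: extreme point → d-1 independent active rows
    rintro ⟨hw, hext⟩
    refine ⟨hw, ?_⟩
    have hd : 1 ≤ d := by
      by_contra h
      have hd0 : d = 0 := by omega
      have := hw.2
      subst hd0
      simp at this
    have hw0 : w ≠ 0 := by
      intro h
      have := hw.2
      rw [h] at this
      simp at this
    set Z : Finset (Fin n ⊕ Fin d) :=
      Finset.univ.filter (fun s => row s ⬝ᵥ w = 0) with hZ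
    have hZmem : ∀ s, s ∈ Z ↔ row s ⬝ᵥ w = 0 := by
      intro s; simp [hZ]
    by_cases hcase : d - 1 ≤ finrank ℝ (span ℝ (row '' (Z : Set (Fin n ⊕ Fin d))))
    · -- enough active rows: extract an independent subfamily of size d-1
      obtain ⟨b, hbsub, hbspan, hbli⟩ :=
        exists_linearIndependent ℝ (row '' (Z : Set (Fin n ⊕ Fin d)))
      have hbfin : b.Finite := hbli.setFinite
      haveI := hbfin.fintype
      have hc1 : finrank ℝ (span ℝ b) = b.toFinset.card := finrank_span_set_eq_card hbli
      have hcardle : d - 1 ≤ b.toFinset.card := by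
        rw [← hc1, hbspan]; exact hcase
      obtain ⟨t, hts, htcard⟩ := Finset.exists_subset_card_eq hcardle
      have hmem_img : ∀ x ∈ t, ∃ s ∈ Z, row s = x := by
        intro x hxt
        have hxb : x ∈ b := by
          have := hts hxt; simpa using this
        obtain ⟨s, hs, hsx⟩ := hbsub hxb
        exact ⟨s, hs, hsx⟩
      set pre : (Fin d → ℝ) → (Fin n ⊕ Fin d) :=
        fun x => if h : ∃ s ∈ Z, row s = x then h.choose else Sum.inr ⟨0, hd⟩ with hpre
      have hpre_spec : ∀ x ∈ t, pre x ∈ Z ∧ row (pre x) = x := by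
        intro x hxt
        have h := hmem_img x hxt
        rw [hpre]
        simp only [dif_pos h]
        exact ⟨h.choose_spec.1, h.choose_spec.2⟩
      refine ⟨t.image pre, ?_, ?_, ?_⟩
      · rw [Finset.card_image_of_injOn, htcard]
        intro x hx y hy hxy
        rw [← (hpre_spec x hx).2, ← (hpre_spec y hy).2, hxy]
      · -- linear independence
        have hmemb : ∀ s ∈ t.image pre, row s ∈ b := by
          intro s hs
          obtain ⟨x, hxt, rfl⟩ := Finset.mem_image.mp hs
          rw [(hpre_spec x hxt).2]
          have := hts hxt; simpa using this
        have hinj : ∀ s₁ ∈ t.image pre, ∀ s₂ ∈ t.image pre, row s₁ = row s₂ → s₁ = s₂ := by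
          intro s₁ hs₁ s₂ hs₂ h
          obtain ⟨x₁, hx₁, rfl⟩ := Finset.mem_image.mp hs₁
          obtain ⟨x₂, hx₂, rfl⟩ := Finset.mem_image.mp hs₂
          rw [(hpre_spec x₁ hx₁).2, (hpre_spec x₂ hx₂).2] at h
          rw [h]
        have := hbli.comp
          (fun s : {a // a ∈ t.image pre} => (⟨row s.1, hmemb s.1 s.2⟩ : b))
          (by
            intro s₁ s₂ h
            simp only [Subtype.mk.injEq] at h
            exact Subtype.ext (hinj s₁.1 s₁.2 s₂.1 s₂.2 h))
        exact this
      · intro s hs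
        obtain ⟨x, hxt, rfl⟩ := Finset.mem_image.mp hs
        rw [hrowdot]
        exact (hZmem _).mp (hpre_spec x hxt).1
    · -- not enough active rows: construct a perturbation, contradicting extremality
      exfalso
      set M : Matrix {a // a ∈ Z} (Fin d) ℝ := fun s => row s.1 with hM
      have hrange : Set.range M = row '' (Z : Set (Fin n ⊕ Fin d)) := by
        ext x
        constructor
        · rintro ⟨s, rfl⟩; exact ⟨s.1, s.2, rfl⟩
        · rintro ⟨s, hs, rfl⟩; exact ⟨⟨s, hs⟩, rfl⟩
      have hkerbig : 2 ≤ finrank ℝ (LinearMap.ker M.mulVecLin) := by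
        have h1 := LinearMap.finrank_range_add_finrank_ker M.mulVecLin
        rw [Module.finrank_fin_fun] at h1
        have h2 : M.rank = finrank ℝ (span ℝ (row '' (Z : Set (Fin n ⊕ Fin d)))) := by
          rw [Matrix.rank_eq_finrank_span_row, show Set.range M.row = Set.range M from rfl, hrange]
        rw [Matrix.rank] at h2
        omega
      have hwker : w ∈ LinearMap.ker M.mulVecLin := by
        rw [stmt12_mem_ker]
        intro s
        exact (hZmem s.1).mp s.2
      obtain ⟨v, hvN, hvsp⟩ : ∃ v, v ∈ LinearMap.ker M.mulVecLin ∧ v ∉ span ℝ {w} := by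
        by_contra hcon
        push_neg at hcon
        have hle : LinearMap.ker M.mulVecLin ≤ span ℝ {w} := fun x hx => hcon x hx
        have := Submodule.finrank_mono hle
        rw [finrank_span_singleton hw0] at this
        omega
      have hvrows : ∀ s ∈ Z, row s ⬝ᵥ v = 0 := by
        intro s hs
        exact (stmt12_mem_ker M v).mp hvN ⟨s, hs⟩
      have hv0 : ∀ k, w k = 0 → v k = 0 := by
        intro k hk
        have hkZ : Sum.inr k ∈ Z := by
          rw [hZmem, hrow2]
          rw [show (Pi.single k 1 : Fin d → ℝ) ⬝ᵥ w = ∑ j, (Pi.single k (1:ℝ) : Fin d → ℝ) j * w j from rfl]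
          rw [stmt12_single_dot]; exact hk
        have := hvrows _ hkZ
        rw [hrow2] at this
        rw [show (Pi.single k 1 : Fin d → ℝ) ⬝ᵥ v = ∑ j, (Pi.single k (1:ℝ) : Fin d → ℝ) j * v j from rfl,
          stmt12_single_dot] at this
        exact this
      have hXv : ∀ i : Fin n, X i ⬝ᵥ w = 0 → X i ⬝ᵥ v = 0 := by
        intro i hi
        have hiZ : Sum.inl i ∈ Z := by rw [hZmem, hrow1]; exact hi
        have := hvrows _ hiZ
        rwa [hrow1] at this
      -- signs and the linear functional t
      set g : Fin d → ℝ := fun k => if 0 ≤ w k then 1 else -1 with hg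
      set tt : ℝ := ∑ k, g k * v k with htt
      have hgw : ∀ k, g k * w k = |w k| := by
        intro k
        by_cases h : 0 ≤ w k
        · rw [hg]; simp [h, abs_of_nonneg h]
        · rw [hg]; simp only [h, if_false]
          rw [abs_of_neg (lt_of_not_ge h)]; ring
      -- choice of ε
      set F : Finset ℝ := insert (1 / (2 * (|tt| + 1)))
        ((Finset.univ.image fun i : Fin n =>
            if A.mulVec w i = 0 then 1 else A.mulVec w i / (|A.mulVec v i| + 1)) ∪
         (Finset.univ.image fun k : Fin d =>
            if w k = 0 then 1 else |w k| / (|v k| + 1))) with hF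
      have hFne : F.Nonempty := ⟨_, Finset.mem_insert_self _ _⟩
      have hFpos : ∀ x ∈ F, 0 < x := by
        intro x hx
        rw [hF] at hx
        simp only [Finset.mem_insert, Finset.mem_union, Finset.mem_image, Finset.mem_univ,
          true_and] at hx
        rcases hx with rfl | ⟨i, rfl⟩ | ⟨k, rfl⟩
        · positivity
        · by_cases h : A.mulVec w i = 0
          · simp [h]
          · have h0 := hw.1 i
            have hpos : 0 < A.mulVec w i := lt_of_le_of_ne h0 (Ne.symm h)
            simp only [h, if_false]
            positivity
        · by_cases h : w k = 0
          · simp [h]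
          · have : 0 < |w k| := abs_pos.mpr h
            simp only [h, if_false]
            positivity
      set ε : ℝ := F.min' hFne with hεdef
      have hεpos : 0 < ε := hFpos _ (F.min'_mem hFne)
      have hεle : ∀ x ∈ F, ε ≤ x := fun x hx => F.min'_le x hx
      have hεt : ε * |tt| ≤ 1 / 2 := by
        have h1 : ε ≤ 1 / (2 * (|tt| + 1)) := hεle _ (by rw [hF]; exact Finset.mem_insert_self _ _)
        have h2 : 0 < 2 * (|tt| + 1) := by positivity
        have h3 : ε * (2 * (|tt| + 1)) ≤ 1 := by
          rw [← le_div_iff₀ h2]; exact h1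
        nlinarith [abs_nonneg tt, hεpos]
      have habsεt : |ε * tt| ≤ 1 / 2 := by rw [abs_mul, abs_of_pos hεpos]; exact hεt
      have h1pos : 0 < 1 + ε * tt := by
        have := neg_abs_le (ε * tt); linarith
      have h2pos : 0 < 1 - ε * tt := by
        have := le_abs_self (ε * tt); linarith
      have hconeA : ∀ i, A.mulVec w i ≠ 0 → ε * |A.mulVec v i| < A.mulVec w i := by
        intro i hi
        have h1 : ε ≤ A.mulVec w i / (|A.mulVec v i| + 1) := by
          have : (if A.mulVec w i = 0 then (1:ℝ) else A.mulVec w i / (|A.mulVec v i| + 1)) ∈ F := by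
            rw [hF]
            exact Finset.mem_insert_of_mem (Finset.mem_union_left _
              (Finset.mem_image_of_mem _ (Finset.mem_univ i)))
          have := hεle _ this
          rwa [if_neg hi] at this
        have h2 : 0 < |A.mulVec v i| + 1 := by positivity
        have h3 : ε * (|A.mulVec v i| + 1) ≤ A.mulVec w i := by
          rw [← le_div_iff₀ h2]; exact h1
        nlinarith
      have hcoordb : ∀ k, w k ≠ 0 → ε * |v k| < |w k| := by
        intro k hk
        have h1 : ε ≤ |w k| / (|v k| + 1) := by
          have : (if w k = 0 then (1:ℝ) else |w k| / (|v k| + 1)) ∈ F := by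
            rw [hF]
            exact Finset.mem_insert_of_mem (Finset.mem_union_right _
              (Finset.mem_image_of_mem _ (Finset.mem_univ k)))
          have := hεle _ this
          rwa [if_neg hk] at this
        have h2 : 0 < |v k| + 1 := by positivity
        have h3 : ε * (|v k| + 1) ≤ |w k| := by
          rw [← le_div_iff₀ h2]; exact h1
        nlinarith
      -- the perturbed points stay in the cone
      have hcone : ∀ η : ℝ, |η| ≤ ε → ∀ i, 0 ≤ A.mulVec (w + η • v) i := by
        intro η hη i
        rw [Matrix.mulVec_add, Matrix.mulVec_smul]
        simp only [Pi.add_apply, Pi.smul_apply, smul_eq_mul]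
        by_cases h0 : A.mulVec w i = 0
        · have hx : X i ⬝ᵥ w = 0 := by
            have := hAw w i
            rw [h0] at this
            exact (mul_eq_zero.mp this.symm).resolve_left (hsig0 i)
          have hv : A.mulVec v i = 0 := by
            rw [hAw, hXv i hx, mul_zero]
          rw [h0, hv]; simp
        · have h1 := hconeA i h0
          have h2 : |η * A.mulVec v i| ≤ ε * |A.mulVec v i| := by
            rw [abs_mul]
            exact mul_le_mul_of_nonneg_right hη (abs_nonneg _)
          have h3 := neg_abs_le (η * A.mulVec v i)
          linarith
      -- the perturbed points have computable ℓ1 norm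
      have habs : ∀ η : ℝ, |η| ≤ ε → ∀ k, |w k + η * v k| = g k * w k + η * (g k * v k) := by
        intro η hη k
        by_cases h0 : w k = 0
        · rw [h0, hv0 k h0]; simp
        · have h1 := hcoordb k h0
          have h2 : |η * v k| < |w k| := by
            rw [abs_mul]
            calc |η| * |v k| ≤ ε * |v k| := mul_le_mul_of_nonneg_right hη (abs_nonneg _)
              _ < |w k| := h1
          have h3 := neg_abs_le (η * v k)
          have h4 := le_abs_self (η * v k)
          by_cases hpos : 0 ≤ w k
          · have hwk : 0 < w k := lt_of_le_of_ne hpos (Ne.symm h0)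
            rw [abs_of_pos hwk] at h2
            have : 0 < w k + η * v k := by linarith
            rw [abs_of_pos this, hg]
            simp [hpos]
          · have hwk : w k < 0 := lt_of_not_ge hpos
            rw [abs_of_neg hwk] at h2
            have : w k + η * v k < 0 := by linarith
            rw [abs_of_neg this, hg]
            simp only [hpos, if_false]
            ring
      have hsum : ∀ η : ℝ, |η| ≤ ε → ∑ k, |w k + η * v k| = 1 + η * tt := by
        intro η hη
        have h1 : ∑ k, |w k + η * v k| = ∑ k, (g k * w k + η * (g k * v k)) := by
          exact Finset.sum_congr rfl fun k _ => habs η hη k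
        rw [h1, Finset.sum_add_distrib, ← Finset.mul_sum]
        have h2 : ∑ k, g k * w k = 1 := by
          have : ∑ k, g k * w k = ∑ k, |w k| := Finset.sum_congr rfl fun k _ => hgw k
          rw [this]; exact hw.2
        rw [h2, htt]
      -- the two perturbed, renormalized points
      set w₁ : Fin d → ℝ := (1 + ε * tt)⁻¹ • (w + ε • v) with hw₁def
      set w₂ : Fin d → ℝ := (1 - ε * tt)⁻¹ • (w + (-ε) • v) with hw₂def
      have hεabs : |ε| ≤ ε := by rw [abs_of_pos hεpos]
      have hnεabs : |(-ε)| ≤ ε := by rw [abs_neg, abs_of_pos hεpos]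
      have hw₁mem : w₁ ∈ {w : Fin d → ℝ |
          (∀ i, 0 ≤ A.mulVec w i) ∧ (∑ k, |w k|) = 1} := by
        constructor
        · intro i
          rw [hw₁def, Matrix.mulVec_smul]
          simp only [Pi.smul_apply, smul_eq_mul]
          exact mul_nonneg (inv_nonneg.mpr h1pos.le) (hcone ε hεabs i)
        · rw [hw₁def]
          have : ∀ k, |((1 + ε * tt)⁻¹ • (w + ε • v)) k| = (1 + ε * tt)⁻¹ * |w k + ε * v k| := by
            intro k
            simp only [Pi.smul_apply, Pi.add_apply, smul_eq_mul]
            rw [abs_mul, abs_of_pos (inv_pos.mpr h1pos)]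
          rw [Finset.sum_congr rfl fun k _ => this k, ← Finset.mul_sum, hsum ε hεabs,
            inv_mul_cancel₀ h1pos.ne']
      have hw₂mem : w₂ ∈ {w : Fin d → ℝ |
          (∀ i, 0 ≤ A.mulVec w i) ∧ (∑ k, |w k|) = 1} := by
        constructor
        · intro i
          rw [hw₂def, Matrix.mulVec_smul]
          simp only [Pi.smul_apply, smul_eq_mul]
          exact mul_nonneg (inv_nonneg.mpr h2pos.le) (hcone (-ε) hnεabs i)
        · rw [hw₂def]
          have : ∀ k, |((1 - ε * tt)⁻¹ • (w + (-ε) • v)) k| = (1 - ε * tt)⁻¹ * |w k + (-ε) * v k| := by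
            intro k
            simp only [Pi.smul_apply, Pi.add_apply, smul_eq_mul]
            rw [abs_mul, abs_of_pos (inv_pos.mpr h2pos)]
          rw [Finset.sum_congr rfl fun k _ => this k, ← Finset.mul_sum, hsum (-ε) hnεabs]
          rw [show 1 + (-ε) * tt = 1 - ε * tt by ring, inv_mul_cancel₀ h2pos.ne']
      set θ : ℝ := (1 + ε * tt) / 2 with hθdef
      have hθ0 : 0 < θ := by rw [hθdef]; linarith
      have hθ1 : θ < 1 := by rw [hθdef]; linarith
      have hcomb : w = θ • w₁ + (1 - θ) • w₂ := by
        funext k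
        rw [hw₁def, hw₂def, hθdef]
        simp only [Pi.add_apply, Pi.smul_apply, smul_eq_mul, Pi.neg_apply]
        field_simp
        ring
      obtain ⟨he1, he2⟩ := hext w₁ hw₁mem w₂ hw₂mem θ hθ0 hθ1 hcomb
      -- w₁ = w forces v ∈ span {w}
      apply hvsp
      rw [Submodule.mem_span_singleton]
      refine ⟨tt, ?_⟩
      funext k
      have h := congrFun he1 k
      rw [hw₁def] at h
      simp only [Pi.smul_apply, Pi.add_apply, smul_eq_mul] at h
      have h2 : w k + ε * v k = (1 + ε * tt) * w k := by
        field_simp at h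
        linarith [h]
      have : ε * v k = ε * (tt * w k) := by ring_nf; ring_nf at h2; linarith
      have := mul_left_cancel₀ hεpos.ne' this
      simpa [smul_eq_mul] using this.symm
  · ------------------------------------------------------------------
    -- backward: d-1 independent active rows → extreme point
    rintro ⟨hw, S, hScard, hSli, hSorth⟩
    refine ⟨hw, ?_⟩
    intro w₁ hw₁ w₂ hw₂ θ hθ0 hθ1 heq
    have hd : 1 ≤ d := by
      by_contra h
      have hd0 : d = 0 := by omega
      have := hw.2
      subst hd0
      simp at this
    have hw0 : w ≠ 0 := by
      intro h
      have := hw.2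
      rw [h] at this
      simp at this
    set M : Matrix {a // a ∈ S} (Fin d) ℝ := fun s => row s.1 with hM
    have hker1 : finrank ℝ (LinearMap.ker M.mulVecLin) = 1 := by
      have h1 := stmt12_ker_dim M hSli
      rw [Fintype.card_coe, hScard] at h1
      omega
    have hwker : w ∈ LinearMap.ker M.mulVecLin := by
      rw [stmt12_mem_ker]
      intro s
      exact hSorth s.1 s.2
    have hspan : LinearMap.ker M.mulVecLin = span ℝ {w} := by
      have hle : span ℝ {w} ≤ LinearMap.ker M.mulVecLin := by
        rw [Submodule.span_singleton_le_iff_mem]; exact hwker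
      exact (Submodule.eq_of_le_of_finrank_le hle
        (by rw [finrank_span_singleton hw0, hker1])).symm
    have hpt : ∀ k, w k = θ * w₁ k + (1 - θ) * w₂ k := by
      intro k
      rw [heq]
      simp
    have h1θ : 0 < 1 - θ := by linarith
    have habs : ∀ k, θ * |w₁ k| + (1 - θ) * |w₂ k| = |w k| := by
      have hle : ∀ k, |w k| ≤ θ * |w₁ k| + (1 - θ) * |w₂ k| := by
        intro k
        rw [hpt k]
        calc |θ * w₁ k + (1 - θ) * w₂ k| ≤ |θ * w₁ k| + |(1 - θ) * w₂ k| := abs_add_le _ _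
          _ = θ * |w₁ k| + (1 - θ) * |w₂ k| := by
              rw [abs_mul, abs_mul, abs_of_pos hθ0, abs_of_pos h1θ]
      have hsum : ∑ k, (θ * |w₁ k| + (1 - θ) * |w₂ k| - |w k|) = 0 := by
        rw [Finset.sum_sub_distrib, Finset.sum_add_distrib, ← Finset.mul_sum, ← Finset.mul_sum,
          hw.2, hw₁.2, hw₂.2]
        ring
      intro k
      have := (Finset.sum_eq_zero_iff_of_nonneg
        (fun k _ => by linarith [hle k])).mp hsum k (Finset.mem_univ k)
      linarith
    -- both endpoints satisfy the active constraints
    have hzero : ∀ (θ' : ℝ), 0 < θ' → θ' < 1 → ∀ u₁ u₂, (∀ i, 0 ≤ A.mulVec u₁ i) →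
        (∀ i, 0 ≤ A.mulVec u₂ i) →
        (∀ k, θ' * |u₁ k| + (1 - θ') * |u₂ k| = |w k|) →
        (∀ k, w k = θ' * u₁ k + (1 - θ') * u₂ k) →
        ∀ s ∈ S, (∑ k, row s k * u₁ k) = 0 := by
      intro θ' hθ0 hθ1 u₁ u₂ hu₁ hu₂ habs' hpt' s hs
      have h1θ : (0:ℝ) < 1 - θ' := by linarith
      rcases s with i | k
      · have hXw : X i ⬝ᵥ w = 0 := by
          have := hSorth _ hs
          rwa [hrowdot, hrow1] at this
        have hA0 : A.mulVec w i = 0 := by rw [hAw, hXw, mul_zero]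
        have hAcomb : A.mulVec w i = θ' * A.mulVec u₁ i + (1 - θ') * A.mulVec u₂ i := by
          have : w = θ' • u₁ + (1 - θ') • u₂ := funext fun k => by
            rw [hpt' k]; simp
          rw [this, Matrix.mulVec_add, Matrix.mulVec_smul, Matrix.mulVec_smul]
          simp
        have h1 := hu₁ i
        have h2 := hu₂ i
        have hθA : θ' * A.mulVec u₁ i = 0 := by
          nlinarith [mul_nonneg hθ0.le h1, mul_nonneg h1θ.le h2]
        have hA1 : A.mulVec u₁ i = 0 := (mul_eq_zero.mp hθA).resolve_left hθ0.ne'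
        have hX1 : X i ⬝ᵥ u₁ = 0 := by
          have := hAw u₁ i
          rw [hA1] at this
          exact (mul_eq_zero.mp this.symm).resolve_left (hsig0 i)
        rw [hrowdot, hrow1]
        exact hX1
      · have hwk : w k = 0 := by
          have := hSorth _ hs
          rwa [hrowdot, hrow2, show (Pi.single k 1 : Fin d → ℝ) ⬝ᵥ w
            = ∑ j, (Pi.single k (1:ℝ) : Fin d → ℝ) j * w j from rfl, stmt12_single_dot] at this
        have h := habs' k
        rw [hwk] at h
        simp only [abs_zero] at h
        have h1 : |u₁ k| = 0 := by
          nlinarith [abs_nonneg (u₁ k), abs_nonneg (u₂ k),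
            mul_nonneg hθ0.le (abs_nonneg (u₁ k)), mul_nonneg h1θ.le (abs_nonneg (u₂ k))]
        have hu1k : u₁ k = 0 := abs_eq_zero.mp h1
        rw [hrowdot, hrow2, show (Pi.single k 1 : Fin d → ℝ) ⬝ᵥ u₁
          = ∑ j, (Pi.single k (1:ℝ) : Fin d → ℝ) j * u₁ j from rfl, stmt12_single_dot]
        exact hu1k
    have hw₁ker : w₁ ∈ LinearMap.ker M.mulVecLin := by
      rw [stmt12_mem_ker]
      intro s
      exact hzero θ hθ0 hθ1 w₁ w₂ hw₁.1 hw₂.1 habs hpt s.1 s.2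
    have hw₂ker : w₂ ∈ LinearMap.ker M.mulVecLin := by
      rw [stmt12_mem_ker]
      intro s
      exact hzero (1 - θ) h1θ (by linarith) w₂ w₁ hw₂.1 hw₁.1
        (fun k => by rw [← habs k]; ring)
        (fun k => by rw [hpt k]; ring) s.1 s.2
    rw [hspan, Submodule.mem_span_singleton] at hw₁ker hw₂ker
    obtain ⟨c₁, hc₁⟩ := hw₁ker
    obtain ⟨c₂, hc₂⟩ := hw₂ker
    have hnorm : ∀ (c : ℝ) (u : Fin d → ℝ), c • w = u → (∑ k, |u k|) = 1 → |c| = 1 := by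
      intro c u hcu hu
      rw [← hcu] at hu
      have : ∑ k, |(c • w) k| = |c| * ∑ k, |w k| := by
        rw [Finset.mul_sum]
        exact Finset.sum_congr rfl fun k _ => by
          simp [abs_mul]
      rw [this, hw.2, mul_one] at hu
      exact hu
    have hc₁abs : |c₁| = 1 := hnorm c₁ w₁ hc₁ hw₁.2
    have hc₂abs : |c₂| = 1 := hnorm c₂ w₂ hc₂ hw₂.2
    obtain ⟨k₀, hk₀⟩ : ∃ k, w k ≠ 0 := by
      by_contra h
      push_neg at h
      exact hw0 (funext h)
    have hceq : θ * c₁ + (1 - θ) * c₂ = 1 := by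
      have h := hpt k₀
      rw [← hc₁, ← hc₂] at h
      simp only [Pi.smul_apply, smul_eq_mul] at h
      have h2 : (θ * c₁ + (1 - θ) * c₂) * w k₀ = 1 * w k₀ := by ring_nf; ring_nf at h; linarith
      exact mul_right_cancel₀ hk₀ h2
    have hc₁le : c₁ ≤ 1 := hc₁abs ▸ le_abs_self c₁
    have hc₂le : c₂ ≤ 1 := hc₂abs ▸ le_abs_self c₂
    have hc₁1 : c₁ = 1 := by
      have h1 : (1 - θ) * c₂ ≤ (1 - θ) * 1 := mul_le_mul_of_nonneg_left hc₂le h1θ.le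
      have h2 : θ * 1 ≤ θ * c₁ := by linarith
      have h3 : 1 ≤ c₁ := le_of_mul_le_mul_left h2 hθ0
      linarith
    have hc₂1 : c₂ = 1 := by
      have h1 : θ * c₁ ≤ θ * 1 := mul_le_mul_of_nonneg_left hc₁le hθ0.le
      have h2 : (1 - θ) * 1 ≤ (1 - θ) * c₂ := by linarith
      have h3 : 1 ≤ c₂ := le_of_mul_le_mul_left h2 h1θ
      linarith
    constructor
    · rw [← hc₁, hc₁1, one_smul]
    · rw [← hc₂, hc₂1, one_smul]
end

section
/- (Archimedean approximation of spherical cone sections by polytopes, Lemma 4.) Let p₁, …, p_k ∈ ℝ^d be vectors with ‖p_i‖₂ = 1 for all i, and let K := {Σ_{i=1}^k λ_i p_i : λ_i ≥ 0} be their conic hull. Assume K is pointed, i.e., K ∩ (−K) = {0}. Let P := conv{p₁, …, p_k}, P₀ := conv({0} ∪ {p₁, …, p_k}), d_min := min{‖w‖₂ : w ∈ P} (pointedness guarantees d_min > 0), and C₂ := K ∩ {w ∈ ℝ^d : ‖w‖₂ ≤ 1}. Then P₀ ⊆ C₂ ⊆ d_min^{−1} · P₀, where d_min^{−1} · P₀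 is the dilation of P₀ by the factor 1/d_min. -/
open scoped Pointwise

lemma mem_conv_range_iff' {d k : ℕ} (p : Fin k → EuclideanSpace ℝ (Fin d))
    (x : EuclideanSpace ℝ (Fin d)) :
    x ∈ convexHull ℝ (Set.range p) ↔
      ∃ μ : Fin k → ℝ, (∀ i, 0 ≤ μ i) ∧ ∑ i, μ i = 1 ∧ x = ∑ i, μ i • p i := by
  constructor
  · intro hx
    rw [convexHull_range_eq_exists_affineCombination] at hx
    obtain ⟨s, w, hw0, hw1, rfl⟩ := hx
    refine ⟨fun i => if i ∈ s then w i else 0, fun i => ?_, ?_, ?_⟩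
    · dsimp only; split
      · exact hw0 _ ‹_›
      · exact le_refl 0
    · simp only [Finset.sum_ite_mem, Finset.univ_inter, hw1]
    · rw [Finset.affineCombination_eq_linear_combination s p w hw1]
      dsimp only
      rw [Finset.sum_congr rfl (fun i (hi : i ∈ Finset.univ) => by
        by_cases h : i ∈ s <;> simp [h] : ∀ i ∈ Finset.univ,
          (if i ∈ s then w i else 0) • p i = if i ∈ s then w i • p i else 0)]
      rw [Finset.sum_ite_mem, Finset.univ_inter]
  · rintro ⟨μ, h0, h1, rfl⟩
    exact (convex_convexHull ℝ _).sum_mem (fun i _ => h0 i) h1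
      (fun i _ => subset_convexHull ℝ _ (Set.mem_range_self i))

/-- Archimedean approximation of spherical cone sections by
polytopes, Lemma 4. -/
theorem stmt14 {d k : ℕ} (p : Fin k → EuclideanSpace ℝ (Fin d))
    (hp : ∀ i, ‖p i‖ = 1)
    (K : Set (EuclideanSpace ℝ (Fin d)))
    (hK : K = {w | ∃ lam : Fin k → ℝ, (∀ i, 0 ≤ lam i) ∧ w = ∑ i, lam i • p i})
    (hpointed : ∀ w ∈ K, -w ∈ K → w = 0)
    (P P₀ : Set (EuclideanSpace ℝ (Fin d)))
    (hP : P = convexHull ℝ (Set.range p))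
    (hP₀ : P₀ = convexHull ℝ (insert 0 (Set.range p)))
    (dmin : ℝ) (hdmin : dmin = sInf ((fun w => ‖w‖) '' P))
    (C₂ : Set (EuclideanSpace ℝ (Fin d)))
    (hC₂ : C₂ = K ∩ Metric.closedBall 0 1) :
    P₀ ⊆ C₂ ∧ C₂ ⊆ dmin⁻¹ • P₀ := by
  -- Basic facts about K
  have hKconv : Convex ℝ K := by
    rw [hK]
    rintro x ⟨a, ha, rfl⟩ y ⟨b, hb, rfl⟩ s t hs ht hst
    refine ⟨fun i => s * a i + t * b i,
      fun i => add_nonneg (mul_nonneg hs (ha i)) (mul_nonneg ht (hb i)), ?_⟩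
    simp [add_smul, mul_smul, Finset.smul_sum, Finset.sum_add_distrib]
  have h0K : (0 : EuclideanSpace ℝ (Fin d)) ∈ K := by
    rw [hK]; exact ⟨0, fun i => le_refl 0, by simp⟩
  have hpK : ∀ i, p i ∈ K := by
    intro i
    rw [hK]
    refine ⟨fun j => if j = i then 1 else 0, fun j => by dsimp only; split <;> norm_num, ?_⟩
    rw [Finset.sum_congr rfl (fun j (hj : j ∈ Finset.univ) => by
      by_cases h : j = i <;> simp [h] : ∀ j ∈ Finset.univ,
        (if j = i then (1:ℝ) else 0) • p j = if j = i then p i else 0)]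
    simp
  -- Part 1
  have part1 : P₀ ⊆ C₂ := by
    rw [hP₀, hC₂]
    apply convexHull_min
    · rintro x (rfl | ⟨i, rfl⟩)
      · exact ⟨h0K, by simp⟩
      · exact ⟨hpK i, by simp [mem_closedBall_zero_iff.symm, mem_closedBall_zero_iff, hp i]⟩
    · exact hKconv.inter (convex_closedBall 0 1)
  refine ⟨part1, ?_⟩
  -- Part 2
  rcases Nat.eq_zero_or_pos k with hk | hk
  · subst hk
    have hrange : Set.range p = ∅ := Set.range_eq_empty p
    have hP0eq : P₀ = {0} := by rw [hP₀, hrange]; simp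
    intro w hw
    rw [hC₂, hK] at hw
    obtain ⟨⟨lam, _, rfl⟩, _⟩ := hw
    simp only [Finset.univ_eq_empty, Finset.sum_empty]
    exact ⟨0, by rw [hP0eq]; simp, by simp⟩
  · have hne : Nonempty (Fin k) := ⟨⟨0, hk⟩⟩
    -- 0 ∉ P
    have h0notP : (0 : EuclideanSpace ℝ (Fin d)) ∉ P := by
      rw [hP]
      intro h0
      obtain ⟨μ, hμ0, hμ1, hμsum⟩ := (mem_conv_range_iff' p 0).mp h0
      obtain ⟨j, -, hj⟩ := Finset.exists_ne_zero_of_sum_ne_zero (by rw [hμ1]; norm_num :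
        ∑ i, μ i ≠ 0)
      have hμj : 0 < μ j := lt_of_le_of_ne (hμ0 j) (Ne.symm hj)
      have hw1 : μ j • p j ∈ K := by
        rw [hK]
        refine ⟨fun i => if i = j then μ j else 0, fun i => ?_, ?_⟩
        · dsimp only; split
          · exact le_of_lt hμj
          · exact le_refl 0
        rw [Finset.sum_congr rfl (fun i (hi : i ∈ Finset.univ) => by
          by_cases h : i = j <;> simp [h] : ∀ i ∈ Finset.univ,
            (if i = j then μ j else 0) • p i = if i = j then μ j • p j else 0)]
        simp
      have hw2 : -(μ j • p j) ∈ K := by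
        rw [hK]
        refine ⟨fun i => if i = j then 0 else μ i, fun i => ?_, ?_⟩
        · dsimp only; split
          · exact le_refl 0
          · exact hμ0 i
        have hsplit : ∑ i, μ i • p i =
            μ j • p j + ∑ i ∈ Finset.univ.erase j, μ i • p i :=
          (Finset.add_sum_erase _ _ (Finset.mem_univ j)).symm
        rw [← hμsum] at hsplit
        have he : ∑ i, (if i = j then (0:ℝ) else μ i) • p i =
            ∑ i ∈ Finset.univ.erase j, μ i • p i := by
          rw [← Finset.add_sum_erase _ (fun i => (if i = j then (0:ℝ) else μ i) • p i)
            (Finset.mem_univ j)]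
          simp only [eq_self_iff_true, if_true, if_pos rfl, zero_smul, zero_add]
          refine Finset.sum_congr rfl (fun i hi => ?_)
          rw [if_neg (Finset.ne_of_mem_erase hi)]
        rw [he]
        exact neg_eq_of_add_eq_zero_right hsplit.symm
      have := hpointed _ hw1 hw2
      have : μ j • p j = 0 := this
      have hnorm : ‖μ j • p j‖ = μ j := by
        rw [norm_smul, hp j, Real.norm_eq_abs, abs_of_pos hμj, mul_one]
      rw [this, norm_zero] at hnorm
      exact absurd hnorm.symm (ne_of_gt hμj)
    -- dmin positive and lower bound
    have hPcompact : IsCompact P := by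
      rw [hP]; exact (Set.finite_range p).isCompact_convexHull (𝕜 := ℝ)
    have hPne : P.Nonempty := ⟨p ⟨0, hk⟩, by
      rw [hP]; exact subset_convexHull ℝ _ (Set.mem_range_self _)⟩
    have himg : IsCompact ((fun w => ‖w‖) '' P) := hPcompact.image continuous_norm
    have himgne : ((fun w => ‖w‖) '' P).Nonempty := hPne.image _
    have hdmem : dmin ∈ (fun w => ‖w‖) '' P := hdmin ▸ himg.sInf_mem himgne
    obtain ⟨w₀, hw₀P, hw₀⟩ := hdmem
    have hdpos : 0 < dmin := by
      rw [← hw₀]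
      exact norm_pos_iff.mpr (fun h => h0notP (h ▸ hw₀P))
    have hlb : ∀ w ∈ P, dmin ≤ ‖w‖ := fun w hw => hdmin ▸ csInf_le himg.bddBelow ⟨w, hw, rfl⟩
    -- the inclusion
    intro w hw
    rw [hC₂] at hw
    obtain ⟨hwK, hwball⟩ := hw
    rw [hK] at hwK
    obtain ⟨lam, hlam0, rfl⟩ := hwK
    have hwnorm : ‖∑ i, lam i • p i‖ ≤ 1 := mem_closedBall_zero_iff.mp hwball
    set s := ∑ i, lam i with hs
    rcases eq_or_lt_of_le (Finset.sum_nonneg (fun i _ => hlam0 i) : (0:ℝ) ≤ s) with hs0 | hs0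
    · have hall : ∀ i ∈ Finset.univ, lam i = 0 :=
        (Finset.sum_eq_zero_iff_of_nonneg (fun i _ => hlam0 i)).mp hs0.symm
      have : ∑ i, lam i • p i = 0 := by
        apply Finset.sum_eq_zero; intro i hi; rw [hall i hi, zero_smul]
      rw [this]
      exact ⟨0, hP₀ ▸ subset_convexHull ℝ _ (Set.mem_insert 0 _), by simp⟩
    · set q := ∑ i, (lam i / s) • p i with hq
      have hqP : q ∈ P := by
        rw [hP, mem_conv_range_iff' p]
        exact ⟨fun i => lam i / s, fun i => div_nonneg (hlam0 i) (le_of_lt hs0),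
          by rw [← Finset.sum_div, ← hs, div_self (ne_of_gt hs0)], rfl⟩
      have hwq : ∑ i, lam i • p i = s • q := by
        rw [hq, Finset.smul_sum]
        exact Finset.sum_congr rfl (fun i _ => by
          rw [smul_smul, mul_div_cancel₀ _ (ne_of_gt hs0)])
      have hsd : s * dmin ≤ 1 := by
        calc s * dmin ≤ s * ‖q‖ := by
              exact mul_le_mul_of_nonneg_left (hlb q hqP) (le_of_lt hs0)
          _ = ‖∑ i, lam i • p i‖ := by
              rw [hwq, norm_smul, Real.norm_eq_abs, abs_of_pos hs0]
          _ ≤ 1 := hwnorm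
      refine ⟨dmin • ∑ i, lam i • p i, ?_, (inv_smul_smul₀ (ne_of_gt hdpos) _)⟩
      rw [hP₀]
      have hconv := convex_convexHull ℝ (insert (0:EuclideanSpace ℝ (Fin d)) (Set.range p))
      have h0m : (0:EuclideanSpace ℝ (Fin d)) ∈ convexHull ℝ (insert 0 (Set.range p)) :=
        subset_convexHull ℝ _ (Set.mem_insert 0 _)
      have hqm : q ∈ convexHull ℝ (insert 0 (Set.range p)) := by
        have : P ⊆ convexHull ℝ (insert 0 (Set.range p)) := by
          rw [hP]; exact convexHull_mono (Set.subset_insert _ _)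
        exact this hqP
      have hcomb := hconv hqm h0m (mul_nonneg (le_of_lt hdpos) (le_of_lt hs0))
        (by linarith : (0:ℝ) ≤ 1 - dmin * s) (by ring)
      have : (dmin * s) • q + (1 - dmin * s) • (0:EuclideanSpace ℝ (Fin d)) =
          dmin • ∑ i, lam i • p i := by
        rw [smul_zero, add_zero, hwq, smul_smul, mul_comm]
      rw [← this]
      exact hcomb
end

section
/- (ℓ1 isometry implies small chamber diameter, Lemma 3.) Let X ∈ ℝ^{n×d}, α > 0 and ε ≥ 0. Suppose that (1 − ε)‖w‖₂ ≤ (1/(αn))‖Xw‖₁ ≤ (1 + ε)‖w‖₂ for all w ∈ ℝ^d. Then the maximum chamber diameter satisfies 𝒟(X) ≤ 4√ε; that is, any two unit vectors w, v ∈ ℝ^d with sign(Xw) = sign(Xv) entrywise satisfy ‖w − v‖₂ ≤ 4√ε. -/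
/-- ℓ1 norm of a vector. -/
noncomputable def l1n {k : ℕ} (v : Fin k → ℝ) : ℝ := ∑ i, |v i|

/-- Euclidean (ℓ2) norm of a vector. -/
noncomputable def l2n {k : ℕ} (v : Fin k → ℝ) : ℝ := Real.sqrt (∑ i, (v i) ^ 2)

lemma abs_add_sign {a b : ℝ} (h : Real.sign a = Real.sign b) : |a + b| = |a| + |b| := by
  rcases lt_trichotomy a 0 with ha | ha | ha
  · have hb : b < 0 := by
      rcases lt_trichotomy b 0 with h1 | h1 | h1
      · exact h1
      · rw [Real.sign_of_neg ha, h1, Real.sign_zero] at h; norm_num at h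
      · rw [Real.sign_of_neg ha, Real.sign_of_pos h1] at h; norm_num at h
    rw [abs_of_neg (by linarith), abs_of_neg ha, abs_of_neg hb]; ring
  · subst ha
    have hb : b = 0 := by
      rw [Real.sign_zero] at h
      exact Real.sign_eq_zero_iff.mp h.symm
    simp [hb]
  · have hb : 0 < b := by
      rcases lt_trichotomy b 0 with h1 | h1 | h1
      · rw [Real.sign_of_pos ha, Real.sign_of_neg h1] at h; norm_num at h
      · rw [Real.sign_of_pos ha, h1, Real.sign_zero] at h; norm_num at h
      · exact h1
    rw [abs_of_pos (by linarith), abs_of_pos ha, abs_of_pos hb]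

/-- ℓ1 isometry implies small chamber diameter, Lemma 3. -/
theorem stmt16 {n d : ℕ} (X : Matrix (Fin n) (Fin d) ℝ) (α ε : ℝ)
    (hα : 0 < α) (hε : 0 ≤ ε)
    (hiso : ∀ w : Fin d → ℝ,
      (1 - ε) * l2n w ≤ (1 / (α * n)) * l1n (fun i => ∑ k, X i k * w k) ∧
      (1 / (α * n)) * l1n (fun i => ∑ k, X i k * w k) ≤ (1 + ε) * l2n w) :
    ∀ w v : Fin d → ℝ, l2n w = 1 → l2n v = 1 →
      (∀ i, Real.sign (∑ k, X i k * w k) = Real.sign (∑ k, X i k * v k)) →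
      l2n (w - v) ≤ 4 * Real.sqrt ε := by
  intro w v hw hv hsign
  have hw2 : ∑ i, (w i) ^ 2 = 1 := by
    have h0 : (0:ℝ) ≤ ∑ i, (w i) ^ 2 := Finset.sum_nonneg fun i _ => sq_nonneg _
    have := Real.sq_sqrt h0
    rw [show Real.sqrt (∑ i, (w i) ^ 2) = l2n w from rfl, hw] at this
    linarith [this]
  have hv2 : ∑ i, (v i) ^ 2 = 1 := by
    have h0 : (0:ℝ) ≤ ∑ i, (v i) ^ 2 := Finset.sum_nonneg fun i _ => sq_nonneg _
    have := Real.sq_sqrt h0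
    rw [show Real.sqrt (∑ i, (v i) ^ 2) = l2n v from rfl, hv] at this
    linarith [this]
  set S : ℝ := ∑ i, ((w + v) i) ^ 2 with hSdef
  set T : ℝ := ∑ i, ((w - v) i) ^ 2 with hTdef
  have hS0 : 0 ≤ S := Finset.sum_nonneg fun i _ => sq_nonneg _
  have hT0 : 0 ≤ T := Finset.sum_nonneg fun i _ => sq_nonneg _
  have hpar : T + S = 4 := by
    have : T + S = ∑ i, (((w - v) i) ^ 2 + ((w + v) i) ^ 2) := by
      rw [Finset.sum_add_distrib]
    rw [this]
    have : ∀ i ∈ Finset.univ, ((w - v) i) ^ 2 + ((w + v) i) ^ 2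
        = 2 * (w i) ^ 2 + 2 * (v i) ^ 2 := by
      intro i _
      simp only [Pi.sub_apply, Pi.add_apply]; ring
    rw [Finset.sum_congr rfl this, Finset.sum_add_distrib, ← Finset.mul_sum,
      ← Finset.mul_sum, hw2, hv2]
    norm_num
  -- key bound: T ≤ 16 ε
  have hkey : T ≤ 16 * ε := by
    rcases le_or_gt (1/4 : ℝ) ε with hc | hc
    · linarith
    · -- ε < 1/4, use the isometry
      have hA := (hiso w).1
      have hB := (hiso v).1
      have hC := (hiso (w + v)).2
      rw [hw] at hA
      rw [hv] at hB
      have hadd : l1n (fun i => ∑ k, X i k * (w + v) k)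
          = l1n (fun i => ∑ k, X i k * w k) + l1n (fun i => ∑ k, X i k * v k) := by
        unfold l1n
        rw [← Finset.sum_add_distrib]
        apply Finset.sum_congr rfl
        intro i _
        have : (∑ k, X i k * (w + v) k) = (∑ k, X i k * w k) + (∑ k, X i k * v k) := by
          rw [← Finset.sum_add_distrib]
          apply Finset.sum_congr rfl
          intro k _
          simp only [Pi.add_apply]; ring
        show |∑ k, X i k * (w + v) k| = |∑ k, X i k * w k| + |∑ k, X i k * v k|
        rw [this, abs_add_sign (hsign i)]
      have hlow : 2 * (1 - ε) ≤ (1 + ε) * l2n (w + v) := by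
        calc 2 * (1 - ε) = (1 - ε) * 1 + (1 - ε) * 1 := by ring
          _ ≤ (1 / (α * n)) * l1n (fun i => ∑ k, X i k * w k)
              + (1 / (α * n)) * l1n (fun i => ∑ k, X i k * v k) := add_le_add hA hB
          _ = (1 / (α * n)) * l1n (fun i => ∑ k, X i k * (w + v) k) := by
              rw [hadd]; ring
          _ ≤ (1 + ε) * l2n (w + v) := hC
      have hl2 : l2n (w + v) = Real.sqrt S := rfl
      set r : ℝ := Real.sqrt S with hrdef
      have hr0 : 0 ≤ r := Real.sqrt_nonneg _
      have hrS : r ^ 2 = S := Real.sq_sqrt hS0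
      rw [hl2] at hlow
      -- from (1+ε) r ≥ 2(1-ε) and 0 ≤ r: r² ≥ 4(1-ε)²/(1+ε)²
      have hsq : 4 * (1 - ε) ^ 2 ≤ (1 + ε) ^ 2 * r ^ 2 := by
        nlinarith [hlow, hr0, hε, hc]
      nlinarith [hsq, hrS, hpar, hε, sq_nonneg ε]
  have : l2n (w - v) = Real.sqrt T := rfl
  rw [this]
  have h16 : Real.sqrt (16 * ε) = 4 * Real.sqrt ε := by
    rw [show (16:ℝ) * ε = 4 ^ 2 * ε by ring, Real.sqrt_mul (by positivity),
      Real.sqrt_sq (by norm_num)]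
  rw [← h16]
  exact Real.sqrt_le_sqrt hkey
end
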